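/- Let L be a nonempty language and w₀, w₁, w₂ words over Σ, and define Q₁ = {u : ∃ v, w₀ ++ u ++ w₁ ++ v ++ w₂ ∈ L} and Q₂ = {v : ∃ u, w₀ ++ u ++ w₁ ++ v ++ w₂ ∈ L}. Then a perfect typing for the design (L, w₀ f₁ w₁ f₂ w₂) exists if and only if {w₀}·Q₁·{w₁}·Q₂·{w₂} = L, and in that case (Q₁, Q₂) is the perfect typing. -/

import Mathlib

/-- All words that can fill the first function slot of `w₀ f₁ w₁ f₂ w₂` in some word of `L`. -/
def firstSlot {α : Type} (L : Language α) (w₀ w₁ w₂ : List α) : Language α :=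
  {u : List α | ∃ v, w₀ ++ u ++ w₁ ++ v ++ w₂ ∈ L}

/-- All words that can fill the second function slot of `w₀ f₁ w₁ f₂ w₂` in some word of `L`. -/
def secondSlot {α : Type} (L : Language α) (w₀ w₁ w₂ : List α) : Language α :=
  {v : List α | ∃ u, w₀ ++ u ++ w₁ ++ v ++ w₂ ∈ L}

lemma mem_prod_iff {α : Type} (X Y : Language α) (w₀ w₁ w₂ w : List α) :
    w ∈ ({w₀} : Language α) * X * {w₁} * Y * {w₂} ↔
      ∃ u ∈ X, ∃ v ∈ Y, w = w₀ ++ u ++ w₁ ++ v ++ w₂ := by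
  simp only [Language.mem_mul, Set.mem_singleton_iff]
  constructor
  · rintro ⟨p, ⟨p2, ⟨p3, ⟨p4, rfl, u, hu, rfl⟩, q3, rfl, rfl⟩, v, hv, rfl⟩, q, rfl, rfl⟩
    exact ⟨u, hu, v, hv, by simp⟩
  · rintro ⟨u, hu, v, hv, rfl⟩
    exact ⟨_, ⟨_, ⟨_, ⟨_, rfl, u, hu, rfl⟩, _, rfl, rfl⟩, v, hv, rfl⟩, _, rfl, by simp⟩

lemma sound_sub {α : Type} {L : Language α} {w₀ w₁ w₂ : List α} {X Y : Language α}
    (hX : ∃ w, w ∈ X) (hY : ∃ w, w ∈ Y)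
    (h : ({w₀} : Language α) * X * {w₁} * Y * {w₂} ≤ L) :
    X ≤ firstSlot L w₀ w₁ w₂ ∧ Y ≤ secondSlot L w₀ w₁ w₂ := by
  obtain ⟨x, hx⟩ := hX
  obtain ⟨y, hy⟩ := hY
  constructor
  · intro u hu
    exact ⟨y, h ((mem_prod_iff X Y w₀ w₁ w₂ _).2 ⟨u, hu, y, hy, rfl⟩)⟩
  · intro v hv
    exact ⟨x, h ((mem_prod_iff X Y w₀ w₁ w₂ _).2 ⟨x, hx, v, hv, rfl⟩)⟩

theorem perfect_typing_exists_iff {α : Type} (L : Language α) (hL : ∃ w, w ∈ L)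
    (w₀ w₁ w₂ : List α) :
    ((∃ P₁ P₂ : Language α,
        ({w₀} : Language α) * P₁ * {w₁} * P₂ * {w₂} = L ∧
        ∀ X Y : Language α, (∃ w, w ∈ X) → (∃ w, w ∈ Y) →
          ({w₀} : Language α) * X * {w₁} * Y * {w₂} ≤ L → X ≤ P₁ ∧ Y ≤ P₂) ↔
      ({w₀} : Language α) * firstSlot L w₀ w₁ w₂ * {w₁} * secondSlot L w₀ w₁ w₂ * {w₂} = L) ∧
    (({w₀} : Language α) * firstSlot L w₀ w₁ w₂ * {w₁} * secondSlot L w₀ w₁ w₂ * {w₂} = L →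
      (∀ X Y : Language α, (∃ w, w ∈ X) → (∃ w, w ∈ Y) →
        ({w₀} : Language α) * X * {w₁} * Y * {w₂} ≤ L →
          X ≤ firstSlot L w₀ w₁ w₂ ∧ Y ≤ secondSlot L w₀ w₁ w₂)) := by
  refine ⟨⟨?_, ?_⟩, ?_⟩
  · rintro ⟨P₁, P₂, hEq, hMax⟩
    -- P₁, P₂ nonempty
    obtain ⟨w, hw⟩ := hL
    rw [← hEq] at hw
    obtain ⟨u₀, hu₀, v₀, hv₀, rfl⟩ := (mem_prod_iff P₁ P₂ w₀ w₁ w₂ w).1 hw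
    have hP₁ : P₁ ≤ firstSlot L w₀ w₁ w₂ ∧ P₂ ≤ secondSlot L w₀ w₁ w₂ :=
      sound_sub ⟨u₀, hu₀⟩ ⟨v₀, hv₀⟩ (le_of_eq hEq)
    have hQ₁ : firstSlot L w₀ w₁ w₂ ≤ P₁ := by
      intro u hu
      obtain ⟨v, hv⟩ := hu
      have := hMax {u} {v} ⟨u, rfl⟩ ⟨v, rfl⟩ ?_
      · exact this.1 rfl
      · intro w hw'
        obtain ⟨u', hu', v', hv', rfl⟩ := (mem_prod_iff _ _ w₀ w₁ w₂ w).1 hw'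
        replace hu' : u' = u := hu'; replace hv' : v' = v := hv'
        subst hu'; subst hv'; exact hv
    have hQ₂ : secondSlot L w₀ w₁ w₂ ≤ P₂ := by
      intro v hv
      obtain ⟨u, hu⟩ := hv
      have := hMax {u} {v} ⟨u, rfl⟩ ⟨v, rfl⟩ ?_
      · exact this.2 rfl
      · intro w hw'
        obtain ⟨u', hu', v', hv', rfl⟩ := (mem_prod_iff _ _ w₀ w₁ w₂ w).1 hw'
        replace hu' : u' = u := hu'; replace hv' : v' = v := hv'
        subst hu'; subst hv'; exact hu
    rw [← le_antisymm hP₁.1 hQ₁, ← le_antisymm hP₁.2 hQ₂]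
    exact hEq
  · intro h
    exact ⟨_, _, h, fun X Y hX hY hsub => sound_sub hX hY hsub⟩
  · intro _ X Y hX hY hsub
    exact sound_sub hX hY hsub
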